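/- With D₀ = 3εΔ, Z₀ = Δ/2, D_{i+1} = 12 D_i √(δ_i), Z_{i+1} = D_i/√(δ_i), δ_i = D_i/Z_i, and ε = 100^{-√(ln Δ)}/(100K) for a constant K ≥ 1, we have δ_i ≤ 1/K for all 0 ≤ i ≤ ⌈√(ln Δ)⌉. -/

import Mathlib

/-- With `ε = 100^{-√(ln Δ)}/(100K)` and the recurrence `D₀ = 3εΔ`, `Z₀ = Δ/2`,
`D_{i+1} = 12 D_i √(δ_i)`, `Z_{i+1} = D_i/√(δ_i)`, `δ_i = D_i/Z_i`, we have
`δ_i ≤ 1/K` for all `0 ≤ i ≤ ⌈√(ln Δ)⌉`. -/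
theorem stmt_11 (Δ K ε : ℝ) (hΔ : 1 < Δ) (hK : 1 ≤ K)
    (hε : ε = (100 : ℝ) ^ (-Real.sqrt (Real.log Δ)) / (100 * K))
    (D Z : ℕ → ℝ) (hD0 : D 0 = 3 * ε * Δ) (hZ0 : Z 0 = Δ / 2)
    (hD : ∀ i, D (i + 1) = 12 * D i * Real.sqrt (D i / Z i))
    (hZ : ∀ i, Z (i + 1) = D i / Real.sqrt (D i / Z i)) :
    ∀ i ≤ ⌈Real.sqrt (Real.log Δ)⌉₊, D i / Z i ≤ 1 / K := by
  have hK0 : (0:ℝ) < K := lt_of_lt_of_le one_pos hK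
  have hΔ0 : (0:ℝ) < Δ := lt_trans one_pos hΔ
  have hε0 : 0 < ε := by
    rw [hε]
    positivity
  set s := Real.sqrt (Real.log Δ) with hs
  have hs0 : 0 ≤ s := Real.sqrt_nonneg _
  have key : ∀ i, 0 < D i ∧ 0 < Z i ∧ D i / Z i = 6 * ε * 12 ^ i := by
    intro i
    induction i with
    | zero =>
      refine ⟨by rw [hD0]; positivity, by rw [hZ0]; positivity, ?_⟩
      rw [hD0, hZ0]
      field_simp
      ring
    | succ n ih =>
      obtain ⟨hDn, hZn, hr⟩ := ih
      have hδ : 0 < D n / Z n := div_pos hDn hZn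
      have hsq : 0 < Real.sqrt (D n / Z n) := Real.sqrt_pos.mpr hδ
      refine ⟨by rw [hD n]; positivity, by rw [hZ n]; positivity, ?_⟩
      rw [hD n, hZ n]
      have h1 : (12 * D n * Real.sqrt (D n / Z n)) / (D n / Real.sqrt (D n / Z n))
          = 12 * (Real.sqrt (D n / Z n) * Real.sqrt (D n / Z n)) := by
        have hD2 : Real.sqrt (D n) * Real.sqrt (D n) = D n := Real.mul_self_sqrt hDn.le
        have hZ2 : Real.sqrt (Z n) * Real.sqrt (Z n) = Z n := Real.mul_self_sqrt hZn.le
        field_simp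
      rw [h1, Real.mul_self_sqrt hδ.le, hr]
      ring
  intro i hi
  rw [(key i).2.2, hε]
  -- bound 12^i ≤ 12^(s+1) (rpow)
  have hi' : (i : ℝ) ≤ s + 1 := by
    have h1 : (i : ℝ) ≤ (⌈s⌉₊ : ℝ) := by exact_mod_cast hi
    have h2 : (⌈s⌉₊ : ℝ) < s + 1 := Nat.ceil_lt_add_one hs0
    linarith
  have hpow : (12 : ℝ) ^ i ≤ (12 : ℝ) ^ (s + 1) := by
    rw [← Real.rpow_natCast 12 i]
    exact Real.rpow_le_rpow_of_exponent_le (by norm_num) hi'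
  have hA : (12 : ℝ) ^ s ≤ (100 : ℝ) ^ s :=
    Real.rpow_le_rpow (by norm_num) (by norm_num) hs0
  have h100 : (0:ℝ) < (100:ℝ) ^ s := Real.rpow_pos_of_pos (by norm_num) s
  have h12 : (0:ℝ) < (12:ℝ) ^ s := Real.rpow_pos_of_pos (by norm_num) s
  have hneg : (100 : ℝ) ^ (-s) = ((100:ℝ) ^ s)⁻¹ := Real.rpow_neg (by norm_num) s
  have hsplit : (12 : ℝ) ^ (s + 1) = (12:ℝ) ^ s * 12 := by
    rw [Real.rpow_add (by norm_num), Real.rpow_one]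
  -- chain
  have hεK : ε * 12 ^ i ≤ ((100:ℝ)^s)⁻¹ * ((12:ℝ)^s * 12) / (100 * K) := by
    rw [hε, hneg, ← hsplit, div_mul_eq_mul_div]
    apply div_le_div_of_nonneg_right ?_ (by positivity)
    exact mul_le_mul_of_nonneg_left hpow (by positivity)
  have hfinal : ((100:ℝ)^s)⁻¹ * ((12:ℝ)^s * 12) / (100 * K) ≤ 1 / (6 * K) := by
    rw [div_le_div_iff₀ (by positivity) (by positivity)]
    have : ((100:ℝ)^s)⁻¹ * ((12:ℝ)^s * 12) ≤ 12 := by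
      have h1 : ((100:ℝ)^s)⁻¹ * (12:ℝ)^s ≤ 1 := by
        rw [inv_mul_le_iff₀ h100, mul_one]
        exact hA
      nlinarith
    nlinarith
  calc 6 * ((100:ℝ) ^ (-s) / (100 * K)) * 12 ^ i
      = 6 * ((100:ℝ) ^ (-s) / (100 * K) * 12 ^ i) := by ring
    _ ≤ 6 * (1 / (6 * K)) := by
        apply mul_le_mul_of_nonneg_left ?_ (by norm_num)
        calc (100:ℝ) ^ (-s) / (100 * K) * 12 ^ i
            ≤ ((100:ℝ)^s)⁻¹ * ((12:ℝ)^s * 12) / (100 * K) := by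
              rw [← hε]; exact hεK
          _ ≤ 1 / (6 * K) := hfinal
    _ = 1 / K := by field_simp
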